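/- With the notation of the first-order eigenvector truncation, let instead p̃ = Q^{(m)}(Δ^{(m)})^{-1}(Q^{(m)})^T v + (1/(μ−t) + μ/(μ−t)²) r − (1/(μ−t)²) A r with r = v − Q^{(m)}(Q^{(m)})^T v. Then ‖p − p̃‖² = Σ_{k=m+1}^n ((μ − λ_k)² ⟨q_k, v⟩ / ((μ − t)²(λ_k − t)))², and hence ‖p − p̃‖ ≤ max_{m+1≤k≤n}(λ_k − μ)² / ((μ − t)² · min_{m+1≤k≤n}|λ_k − t|). -/

import Mathlib

open Matrix BigOperators

lemma parseval_aux {n : ℕ} (q : Fin n → Fin n → ℝ)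
    (horth : ∀ k l, ∑ j, q k j * q l j = if k = l then 1 else 0)
    (g : Fin n → ℝ) :
    ∑ i, (∑ k, g k * q k i) ^ 2 = ∑ k, g k ^ 2 := by
  have h1 : ∀ i, (∑ k, g k * q k i) ^ 2
      = ∑ k, ∑ l, (g k * g l) * (q k i * q l i) := by
    intro i
    rw [sq, Finset.sum_mul_sum]
    refine Finset.sum_congr rfl fun k _ => Finset.sum_congr rfl fun l _ => by ring
  simp_rw [h1]
  rw [Finset.sum_comm]
  have h2 : ∀ k, ∑ i, ∑ l, (g k * g l) * (q k i * q l i)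
      = ∑ l, (g k * g l) * ∑ i, q k i * q l i := by
    intro k
    rw [Finset.sum_comm]
    exact Finset.sum_congr rfl fun l _ => by rw [Finset.mul_sum]
  simp_rw [h2, horth]
  simp [sq]

lemma coef_id (d t μ w : ℝ) (hd : d ≠ t) (hμ : μ ≠ t) :
    w / (d - t) - ((1/(μ-t) + μ/(μ-t)^2) * w - (1/(μ-t)^2) * (d * w))
      = (μ - d)^2 * w / ((μ-t)^2 * (d - t)) := by
  have h1 : d - t ≠ 0 := sub_ne_zero.mpr hd
  have h2 : μ - t ≠ 0 := sub_ne_zero.mpr hμ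
  field_simp
  ring

theorem second_order_eigenvector_error
    (n m : ℕ) (hm : m < n)
    (A Q : Matrix (Fin n) (Fin n) ℝ) (d : Fin n → ℝ)
    (hQ : Qᵀ * Q = 1)
    (hA : A = Q * Matrix.diagonal d * Qᵀ)
    (q : Fin n → Fin n → ℝ) (hq : ∀ i j, q i j = Q j i)
    (v : Fin n → ℝ) (hv : Real.sqrt (∑ i, v i ^ 2) = 1)
    (t μ : ℝ) (ht : ∀ k, t ≠ d k) (htμ : t ≠ μ)
    (r : Fin n → ℝ)
    (hr : r = v - ∑ i ∈ Finset.univ.filter (fun i : Fin n => (i : ℕ) < m),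
      (q i ⬝ᵥ v) • q i)
    (p : Fin n → ℝ)
    (hp : p = Q *ᵥ (fun k => (q k ⬝ᵥ v) / (d k - t)))
    (pt : Fin n → ℝ)
    (hpt : pt = (∑ k ∈ Finset.univ.filter (fun k : Fin n => (k : ℕ) < m),
        ((q k ⬝ᵥ v) / (d k - t)) • q k)
      + (1 / (μ - t) + μ / (μ - t) ^ 2) • r
      - (1 / (μ - t) ^ 2) • (A *ᵥ r)) :
    (∑ i, (p i - pt i) ^ 2 =
      ∑ k ∈ Finset.univ.filter (fun k : Fin n => m ≤ (k : ℕ)),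
        ((μ - d k) ^ 2 * (q k ⬝ᵥ v) / ((μ - t) ^ 2 * (d k - t))) ^ 2) ∧
    Real.sqrt (∑ i, (p i - pt i) ^ 2) ≤
      ((Finset.univ.filter (fun k : Fin n => m ≤ (k : ℕ))).sup'
          ⟨⟨m, hm⟩, by simp⟩ (fun k => (d k - μ) ^ 2)) /
        ((μ - t) ^ 2 *
          (Finset.univ.filter (fun k : Fin n => m ≤ (k : ℕ))).inf'
            ⟨⟨m, hm⟩, by simp⟩ (fun k => |d k - t|)) := by
  have hdt : ∀ k, d k - t ≠ 0 := fun k => sub_ne_zero.mpr (Ne.symm (ht k))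
  have hμt : μ - t ≠ 0 := sub_ne_zero.mpr (Ne.symm htμ)
  set w : Fin n → ℝ := fun k => q k ⬝ᵥ v with hw
  -- orthonormality of the columns
  have horth : ∀ k l, ∑ j, q k j * q l j = if k = l then 1 else 0 := by
    intro k l
    have h := congrFun (congrFun hQ k) l
    simp only [Matrix.mul_apply, Matrix.transpose_apply, Matrix.one_apply] at h
    simpa only [hq] using h
  have hQQt : Q * Qᵀ = 1 := by rwa [mul_eq_one_comm] at hQ
  -- expansion of v
  have hvexp : ∀ i, v i = ∑ k, w k * q k i := by
    intro i
    have h1 : ((Q * Qᵀ) *ᵥ v) i = v i := by rw [hQQt, Matrix.one_mulVec]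
    rw [← h1]
    simp only [Matrix.mulVec, dotProduct, Matrix.mul_apply,
      Matrix.transpose_apply, hw, hq]
    simp_rw [Finset.sum_mul]
    rw [Finset.sum_comm]
    exact Finset.sum_congr rfl fun k _ => Finset.sum_congr rfl fun j _ => by ring
  -- expansion of r
  have hri : ∀ i, r i = ∑ k : Fin n, (if m ≤ (k:ℕ) then w k else 0) * q k i := by
    intro i
    rw [hr]
    simp only [Pi.sub_apply, Finset.sum_apply, Pi.smul_apply, smul_eq_mul]
    rw [Finset.sum_filter, hvexp i, ← Finset.sum_sub_distrib]
    refine Finset.sum_congr rfl fun k _ => ?_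
    by_cases hk : m ≤ (k:ℕ)
    · simp [hk, not_lt.mpr hk]
    · simp [hk, not_le.mp hk, hw]
  -- dot products of columns with r
  have hrdot : ∀ b, q b ⬝ᵥ r = if m ≤ (b:ℕ) then w b else 0 := by
    intro b
    have h0 : q b ⬝ᵥ r
        = ∑ k : Fin n, (if m ≤ (k:ℕ) then w k else 0) * (∑ j, q b j * q k j) := by
      simp only [dotProduct]
      simp_rw [hri, Finset.mul_sum]
      rw [Finset.sum_comm]
      exact Finset.sum_congr rfl fun k _ => Finset.sum_congr rfl fun j _ => by ring
    rw [h0]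
    simp_rw [horth]
    simp
  -- expansion of A *ᵥ r
  have hAr : ∀ i, (A *ᵥ r) i
      = ∑ k : Fin n, (if m ≤ (k:ℕ) then d k * w k else 0) * q k i := by
    intro i
    rw [hA, Matrix.mul_assoc, ← Matrix.mulVec_mulVec, ← Matrix.mulVec_mulVec]
    have hQt : (Qᵀ *ᵥ r) = fun b => q b ⬝ᵥ r := by
      funext b
      simp [Matrix.mulVec, dotProduct, Matrix.transpose_apply, hq]
    rw [hQt]
    have hdiag : (Matrix.diagonal d *ᵥ fun b => q b ⬝ᵥ r)
        = fun k => d k * (q k ⬝ᵥ r) := by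
      funext k; exact Matrix.mulVec_diagonal d _ k
    rw [hdiag]
    simp_rw [hrdot]
    simp only [Matrix.mulVec, dotProduct]
    refine Finset.sum_congr rfl fun k _ => ?_
    by_cases hk : m ≤ (k:ℕ) <;> simp [hk, hq] <;> ring
  -- expansion of p
  have hpi : ∀ i, p i = ∑ k, (w k / (d k - t)) * q k i := by
    intro i
    rw [hp]
    simp only [Matrix.mulVec, dotProduct, hq, hw]
    exact Finset.sum_congr rfl fun k _ => by ring
  -- expansion of pt
  have hpti : ∀ i, pt i = ∑ k : Fin n, (if m ≤ (k:ℕ) then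
      ((1/(μ-t) + μ/(μ-t)^2) * w k - (1/(μ-t)^2) * (d k * w k))
      else w k / (d k - t)) * q k i := by
    intro i
    rw [hpt]
    simp only [Pi.sub_apply, Pi.add_apply, Finset.sum_apply, Pi.smul_apply, smul_eq_mul]
    rw [Finset.sum_filter, hri i, hAr i, Finset.mul_sum, Finset.mul_sum,
      ← Finset.sum_add_distrib, ← Finset.sum_sub_distrib]
    refine Finset.sum_congr rfl fun k _ => ?_
    by_cases hk : m ≤ (k:ℕ)
    · simp only [hk, if_true, not_lt.mpr hk, if_false]
      ring
    · simp only [hk, if_false, not_le.mp hk, if_true]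
      ring
  set f : Fin n → ℝ := fun k => if m ≤ (k:ℕ) then
      (μ - d k) ^ 2 * w k / ((μ - t) ^ 2 * (d k - t)) else 0 with hf
  have hdiff : ∀ i, p i - pt i = ∑ k, f k * q k i := by
    intro i
    rw [hpi i, hpti i, ← Finset.sum_sub_distrib]
    refine Finset.sum_congr rfl fun k _ => ?_
    by_cases hk : m ≤ (k:ℕ)
    · simp only [hf, hk, if_true]
      rw [← sub_mul]
      congr 1
      exact coef_id (d k) t μ (w k) (Ne.symm (ht k)) (Ne.symm htμ)
    · simp [hf, hk]
  -- Parseval for the difference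
  have hmain : ∑ i, (p i - pt i) ^ 2 =
      ∑ k ∈ Finset.univ.filter (fun k : Fin n => m ≤ (k : ℕ)),
        ((μ - d k) ^ 2 * (q k ⬝ᵥ v) / ((μ - t) ^ 2 * (d k - t))) ^ 2 := by
    simp_rw [hdiff]
    rw [parseval_aux q horth f, Finset.sum_filter]
    refine Finset.sum_congr rfl fun k _ => ?_
    by_cases hk : m ≤ (k:ℕ) <;> simp [hf, hk, hw]
  refine ⟨hmain, ?_⟩
  -- the bound
  have hSne : (Finset.univ.filter (fun k : Fin n => m ≤ (k : ℕ))).Nonempty :=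
    ⟨⟨m, hm⟩, by simp⟩
  have hIpos : 0 < (Finset.univ.filter (fun k : Fin n => m ≤ (k : ℕ))).inf'
      hSne (fun k => |d k - t|) := by
    rw [Finset.lt_inf'_iff]
    exact fun k _ => abs_pos.mpr (hdt k)
  have hMnn : 0 ≤ (Finset.univ.filter (fun k : Fin n => m ≤ (k : ℕ))).sup'
      hSne (fun k => (d k - μ) ^ 2) :=
    le_trans (sq_nonneg (d ⟨m, hm⟩ - μ))
      (Finset.le_sup' (fun k => (d k - μ) ^ 2) (by simp : (⟨m, hm⟩ : Fin n) ∈ _))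
  have hμt2 : 0 < (μ - t) ^ 2 := by
    have h := abs_pos.mpr hμt
    calc (0:ℝ) < |μ - t| ^ 2 := by positivity
    _ = (μ - t) ^ 2 := sq_abs _
  have hden : 0 < (μ - t) ^ 2 * (Finset.univ.filter (fun k : Fin n => m ≤ (k : ℕ))).inf'
      hSne (fun k => |d k - t|) := mul_pos hμt2 hIpos
  set M := (Finset.univ.filter (fun k : Fin n => m ≤ (k : ℕ))).sup'
      hSne (fun k => (d k - μ) ^ 2) with hM
  set I := (Finset.univ.filter (fun k : Fin n => m ≤ (k : ℕ))).inf'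
      hSne (fun k => |d k - t|) with hI2
  have hBnn : 0 ≤ M / ((μ - t) ^ 2 * I) := div_nonneg hMnn hden.le
  have hterm : ∀ k ∈ Finset.univ.filter (fun k : Fin n => m ≤ (k : ℕ)),
      ((μ - d k) ^ 2 * (q k ⬝ᵥ v) / ((μ - t) ^ 2 * (d k - t))) ^ 2
      ≤ (M / ((μ - t) ^ 2 * I)) ^ 2 * w k ^ 2 := by
    intro k hk
    have habs : |(μ - d k) ^ 2 * (q k ⬝ᵥ v) / ((μ - t) ^ 2 * (d k - t))|
        ≤ M / ((μ - t) ^ 2 * I) * |w k| := by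
      rw [abs_div, abs_mul, abs_mul, abs_pow, abs_pow, sq_abs, sq_abs]
      have h1 : (μ - d k) ^ 2 * |q k ⬝ᵥ v| ≤ M * |w k| := by
        refine mul_le_mul_of_nonneg_right ?_ (abs_nonneg _)
        rw [show (μ - d k) ^ 2 = (d k - μ) ^ 2 by ring, hM]
        exact Finset.le_sup' (fun k => (d k - μ) ^ 2) hk
      have h2 : (μ - t) ^ 2 * I ≤ (μ - t) ^ 2 * |d k - t| :=
        mul_le_mul_of_nonneg_left
          (hI2 ▸ Finset.inf'_le (fun k => |d k - t|) hk) hμt2.le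
      calc (μ - d k) ^ 2 * |q k ⬝ᵥ v| / ((μ - t) ^ 2 * |d k - t|)
          ≤ M * |w k| / ((μ - t) ^ 2 * I) :=
            div_le_div₀ (mul_nonneg hMnn (abs_nonneg _)) h1 hden h2
        _ = M / ((μ - t) ^ 2 * I) * |w k| := by rw [div_mul_eq_mul_div]
    calc ((μ - d k) ^ 2 * (q k ⬝ᵥ v) / ((μ - t) ^ 2 * (d k - t))) ^ 2
        = |(μ - d k) ^ 2 * (q k ⬝ᵥ v) / ((μ - t) ^ 2 * (d k - t))| ^ 2 := (sq_abs _).symm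
      _ ≤ (M / ((μ - t) ^ 2 * I) * |w k|) ^ 2 := pow_le_pow_left₀ (abs_nonneg _) habs 2
      _ = (M / ((μ - t) ^ 2 * I)) ^ 2 * w k ^ 2 := by rw [mul_pow, sq_abs]
  have hv1 : ∑ i, v i ^ 2 = 1 := Real.sqrt_eq_one.mp hv
  have hw1 : ∑ k, w k ^ 2 = 1 := by
    rw [← parseval_aux q horth w]
    simp_rw [← hvexp]
    exact hv1
  have hwS : ∑ k ∈ Finset.univ.filter (fun k : Fin n => m ≤ (k : ℕ)), w k ^ 2 ≤ 1 := by
    rw [← hw1]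
    exact Finset.sum_le_sum_of_subset_of_nonneg (Finset.subset_univ _)
      (fun k _ _ => sq_nonneg _)
  have hsum : ∑ k ∈ Finset.univ.filter (fun k : Fin n => m ≤ (k : ℕ)),
      ((μ - d k) ^ 2 * (q k ⬝ᵥ v) / ((μ - t) ^ 2 * (d k - t))) ^ 2
      ≤ (M / ((μ - t) ^ 2 * I)) ^ 2 := by
    calc ∑ k ∈ Finset.univ.filter (fun k : Fin n => m ≤ (k : ℕ)),
          ((μ - d k) ^ 2 * (q k ⬝ᵥ v) / ((μ - t) ^ 2 * (d k - t))) ^ 2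
        ≤ ∑ k ∈ Finset.univ.filter (fun k : Fin n => m ≤ (k : ℕ)),
            (M / ((μ - t) ^ 2 * I)) ^ 2 * w k ^ 2 := Finset.sum_le_sum hterm
      _ = (M / ((μ - t) ^ 2 * I)) ^ 2
            * ∑ k ∈ Finset.univ.filter (fun k : Fin n => m ≤ (k : ℕ)), w k ^ 2 := by
          rw [Finset.mul_sum]
      _ ≤ (M / ((μ - t) ^ 2 * I)) ^ 2 * 1 :=
          mul_le_mul_of_nonneg_left hwS (sq_nonneg _)
      _ = (M / ((μ - t) ^ 2 * I)) ^ 2 := mul_one _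
  rw [hmain]
  calc Real.sqrt (∑ k ∈ Finset.univ.filter (fun k : Fin n => m ≤ (k : ℕ)),
        ((μ - d k) ^ 2 * (q k ⬝ᵥ v) / ((μ - t) ^ 2 * (d k - t))) ^ 2)
      ≤ Real.sqrt ((M / ((μ - t) ^ 2 * I)) ^ 2) := Real.sqrt_le_sqrt hsum
    _ = M / ((μ - t) ^ 2 * I) := Real.sqrt_sq hBnn
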